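/- Let A, B, C ∈ ℂ^{m×n} and W ∈ ℂ^{n×m} such that A·W, B·W and C·W pairwise commute, and let k be a natural number with k = max{ind(AW), ind(BW), ind(CW), ind(AWBWCW)}. Suppose Y₄, Z₃, U₁ ∈ ℂ^{m×n} are minimal rank W-weighted weak Drazin inverses of B, A and C respectively (so Y₄·W·(B·W)^{k+1} = (B·W)^k with rank(Y₄) = rank((B·W)^k), Z₃·W·(A·W)^{k+1} = (A·W)^k with rank(Z₃) = rank((A·W)^k), and U₁·W·(C·W)^{k+1} = (C·W)^k with rank(U₁) = rank((C·W)^k)), and that (Y₄·W)·(A·W) = (A·W)·(Y₄·W) and (U₁·W)·(A·W·B·W) = (A·W·B·W)·(U₁·W). Then U₁·W·Y₄·W·Z₃ is a minimal rank W-weighted weak Drazin inverse of A·W·B·W·C, i.e. (U₁·W·Y₄·W·Z₃)·W·(A·W·B·W·C·W)^{k+1} = (A·W·B·W·C·W)^k and rank(U₁·W·Y₄·W·Z₃) = rank((A·W·B·W·C·W)^k). -/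
import Mathlib


open Matrix

/-- The index of a square complex matrix: the least `j` with `rank (M^j) = rank (M^(j+1))`. -/
noncomputable def matIndex {p : ℕ} (M : Matrix (Fin p) (Fin p) ℂ) : ℕ :=
  sInf {j : ℕ | (M ^ j).rank = (M ^ (j + 1)).rank}

/-- The column space of a complex matrix: the range of `v ↦ M *ᵥ v`. -/
noncomputable def colSpace {a b : ℕ} (M : Matrix (Fin a) (Fin b) ℂ) :
    Submodule ℂ (Fin a → ℂ) :=
  LinearMap.range M.mulVecLin

/-- The null space of a complex matrix: the kernel of `v ↦ M *ᵥ v`. -/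
noncomputable def nullSpace {a b : ℕ} (M : Matrix (Fin a) (Fin b) ℂ) :
    Submodule ℂ (Fin b → ℂ) :=
  LinearMap.ker M.mulVecLin



lemma colSpace_mul_le {p q r : ℕ} (M : Matrix (Fin p) (Fin q) ℂ) (N : Matrix (Fin q) (Fin r) ℂ) :
    colSpace (M * N) ≤ colSpace M := by
  rw [colSpace, colSpace, Matrix.mulVecLin_mul]
  exact LinearMap.range_comp_le_range _ _

lemma rank_eq_finrank_colSpace {p q : ℕ} (M : Matrix (Fin p) (Fin q) ℂ) :
    M.rank = Module.finrank ℂ (colSpace M) := rfl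

lemma colSpace_factor {p q r : ℕ} (P : Matrix (Fin p) (Fin q) ℂ) (Q : Matrix (Fin p) (Fin r) ℂ)
    (h : colSpace P ≤ colSpace Q) : ∃ R : Matrix (Fin r) (Fin q) ℂ, P = Q * R := by
  have hcol : ∀ j : Fin q, ∃ v : Fin r → ℂ, Q *ᵥ v = fun i => P i j := by
    intro j
    have hm : (fun i => P i j) ∈ colSpace P := by
      refine ⟨Pi.single j 1, ?_⟩
      ext i
      simp [Matrix.mulVecLin_apply, Matrix.mulVec_single]
    exact h hm
  choose v hv using hcol
  refine ⟨Matrix.of fun l j => v j l, ?_⟩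
  ext i j
  have := congrFun (hv j) i
  simpa [Matrix.mul_apply, Matrix.mulVec, dotProduct] using this.symm

lemma factor_exists {p q r : ℕ} (P : Matrix (Fin p) (Fin q) ℂ) (Q : Matrix (Fin p) (Fin r) ℂ)
    (hle : colSpace Q ≤ colSpace P) (hr : P.rank = Q.rank) :
    ∃ R : Matrix (Fin r) (Fin q) ℂ, P = Q * R := by
  have heq : colSpace Q = colSpace P :=
    Submodule.eq_of_le_of_finrank_le hle
      (by rw [← rank_eq_finrank_colSpace, ← rank_eq_finrank_colSpace, hr])
  exact colSpace_factor P Q (le_of_eq heq.symm)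

/-- **Theorem 3.31.** Triple reverse order law for the minimal rank W-weighted weak
Drazin inverse: `U₁·W·Y₄·W·Z₃` is a minimal rank W-weighted weak Drazin inverse of
`A·W·B·W·C`. -/
theorem minimal_rank_weighted_weak_Drazin_triple_reverse_order {m n : ℕ}
    (A B C : Matrix (Fin m) (Fin n) ℂ) (W : Matrix (Fin n) (Fin m) ℂ)
    (hAB : (A * W) * (B * W) = (B * W) * (A * W))
    (hAC : (A * W) * (C * W) = (C * W) * (A * W))
    (hBC : (B * W) * (C * W) = (C * W) * (B * W))
    (k : ℕ)
    (hk : k = max (max (max (matIndex (A * W)) (matIndex (B * W))) (matIndex (C * W)))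
          (matIndex (A * W * B * W * C * W)))
    (Y₄ : Matrix (Fin m) (Fin n) ℂ)
    (hY₄1 : Y₄ * W * (B * W) ^ (k + 1) = (B * W) ^ k)
    (hY₄2 : Y₄.rank = ((B * W) ^ k).rank)
    (Z₃ : Matrix (Fin m) (Fin n) ℂ)
    (hZ₃1 : Z₃ * W * (A * W) ^ (k + 1) = (A * W) ^ k)
    (hZ₃2 : Z₃.rank = ((A * W) ^ k).rank)
    (U₁ : Matrix (Fin m) (Fin n) ℂ)
    (hU₁1 : U₁ * W * (C * W) ^ (k + 1) = (C * W) ^ k)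
    (hU₁2 : U₁.rank = ((C * W) ^ k).rank)
    (hYA : (Y₄ * W) * (A * W) = (A * W) * (Y₄ * W))
    (hUAB : (U₁ * W) * (A * W * B * W) = (A * W * B * W) * (U₁ * W)) :
    (U₁ * W * Y₄ * W * Z₃) * W * (A * W * B * W * C * W) ^ (k + 1) =
      (A * W * B * W * C * W) ^ k ∧
    (U₁ * W * Y₄ * W * Z₃).rank = ((A * W * B * W * C * W) ^ k).rank := by
  have hab : Commute (A*W) (B*W) := hAB
  have hac : Commute (A*W) (C*W) := hAC
  have hbc : Commute (B*W) (C*W) := hBC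
  have habc : Commute ((A*W) * (B*W)) (C*W) := hac.mul_left hbc
  have he0 : A * W * B * W * C * W = (A*W) * (B*W) * (C*W) := by
    simp only [Matrix.mul_assoc]
  have hUab : Commute (U₁ * W) ((A*W) * (B*W)) := by
    have h : A * W * B * W = (A*W) * (B*W) := by simp only [Matrix.mul_assoc]
    rw [Commute, SemiconjBy, ← h]; exact hUAB
  have hYa : Commute (Y₄ * W) (A*W) := hYA
  have pow_split : ∀ j : ℕ, ((A*W) * (B*W) * (C*W)) ^ j = (A*W) ^ j * (B*W) ^ j * (C*W) ^ j := by
    intro j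
    rw [habc.mul_pow, hab.mul_pow]
  have hYak : (Y₄ * W) * (A*W) ^ k = (A*W) ^ k * (Y₄ * W) := (hYa.pow_right k).eq
  have hUabk : (U₁ * W) * ((A*W) ^ k * (B*W) ^ k) = ((A*W) ^ k * (B*W) ^ k) * (U₁ * W) := by
    have h := (hUab.pow_right k).eq
    rwa [hab.mul_pow] at h
  have part1 : (U₁ * W * Y₄ * W * Z₃) * W * ((A*W) * (B*W) * (C*W)) ^ (k + 1)
      = ((A*W) * (B*W) * (C*W)) ^ k := by
    have step : (U₁ * W) * ((Y₄ * W) * ((Z₃ * W) * ((A*W) * (B*W) * (C*W)) ^ (k + 1)))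
        = ((A*W) * (B*W) * (C*W)) ^ k := by
      rw [pow_split (k + 1)]
      calc (U₁*W) * ((Y₄*W) * ((Z₃*W) * ((A*W) ^ (k+1) * (B*W) ^ (k+1) * (C*W) ^ (k+1))))
          = (U₁*W) * ((Y₄*W) * ((Z₃ * W * (A*W) ^ (k+1)) * ((B*W) ^ (k+1) * (C*W) ^ (k+1)))) := by
            simp only [Matrix.mul_assoc]
        _ = (U₁*W) * ((Y₄*W) * ((A*W) ^ k * ((B*W) ^ (k+1) * (C*W) ^ (k+1)))) := by rw [hZ₃1]
        _ = (U₁*W) * ((Y₄ * W * (A*W) ^ k) * ((B*W) ^ (k+1) * (C*W) ^ (k+1))) := by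
            simp only [Matrix.mul_assoc]
        _ = (U₁*W) * (((A*W) ^ k * (Y₄*W)) * ((B*W) ^ (k+1) * (C*W) ^ (k+1))) := by rw [hYak]
        _ = (U₁*W) * ((A*W) ^ k * ((Y₄ * W * (B*W) ^ (k+1)) * (C*W) ^ (k+1))) := by
            simp only [Matrix.mul_assoc]
        _ = (U₁*W) * ((A*W) ^ k * ((B*W) ^ k * (C*W) ^ (k+1))) := by rw [hY₄1]
        _ = ((U₁*W) * ((A*W) ^ k * (B*W) ^ k)) * (C*W) ^ (k+1) := by
            simp only [Matrix.mul_assoc]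
        _ = (((A*W) ^ k * (B*W) ^ k) * (U₁*W)) * (C*W) ^ (k+1) := by rw [hUabk]
        _ = ((A*W) ^ k * (B*W) ^ k) * (U₁ * W * (C*W) ^ (k+1)) := by
            simp only [Matrix.mul_assoc]
        _ = ((A*W) ^ k * (B*W) ^ k) * (C*W) ^ k := by rw [hU₁1]
        _ = ((A*W) * (B*W) * (C*W)) ^ k := by rw [pow_split k]
    calc (U₁ * W * Y₄ * W * Z₃) * W * ((A*W) * (B*W) * (C*W)) ^ (k + 1)
        = (U₁ * W) * ((Y₄ * W) * ((Z₃ * W) * ((A*W) * (B*W) * (C*W)) ^ (k + 1))) := by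
          simp only [Matrix.mul_assoc]
      _ = ((A*W) * (B*W) * (C*W)) ^ k := step
  have hZfac : ∃ S : Matrix (Fin m) (Fin n) ℂ, Z₃ = (A*W) ^ k * S := by
    refine factor_exists _ _ ?_ hZ₃2
    have h : (A*W) ^ k = Z₃ * (W * (A*W) ^ (k + 1)) := by rw [← Matrix.mul_assoc, hZ₃1]
    rw [h]; exact colSpace_mul_le _ _
  have hYfac : ∃ T : Matrix (Fin m) (Fin n) ℂ, Y₄ = (B*W) ^ k * T := by
    refine factor_exists _ _ ?_ hY₄2
    have h : (B*W) ^ k = Y₄ * (W * (B*W) ^ (k + 1)) := by rw [← Matrix.mul_assoc, hY₄1]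
    rw [h]; exact colSpace_mul_le _ _
  have hUfac : ∃ V : Matrix (Fin m) (Fin n) ℂ, U₁ = (C*W) ^ k * V := by
    refine factor_exists _ _ ?_ hU₁2
    have h : (C*W) ^ k = U₁ * (W * (C*W) ^ (k + 1)) := by rw [← Matrix.mul_assoc, hU₁1]
    rw [h]; exact colSpace_mul_le _ _
  obtain ⟨S, hS⟩ := hZfac
  obtain ⟨T, hT⟩ := hYfac
  obtain ⟨V, hV⟩ := hUfac
  have hXfac : ∃ G : Matrix (Fin m) (Fin n) ℂ,
      U₁ * W * Y₄ * W * Z₃ = ((A*W) * (B*W) * (C*W)) ^ k * G := by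
    refine ⟨V * (W * (T * (W * S))), ?_⟩
    calc U₁ * W * Y₄ * W * Z₃
        = (U₁ * W) * ((Y₄ * W * (A*W) ^ k) * S) := by
          rw [hS]; simp only [Matrix.mul_assoc]
      _ = (U₁ * W) * (((A*W) ^ k * (Y₄ * W)) * S) := by rw [hYak]
      _ = (U₁ * W) * ((A*W) ^ k * ((B*W) ^ k * (T * (W * S)))) := by
          rw [hT]; simp only [Matrix.mul_assoc]
      _ = ((U₁ * W) * ((A*W) ^ k * (B*W) ^ k)) * (T * (W * S)) := by
          simp only [Matrix.mul_assoc]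
      _ = (((A*W) ^ k * (B*W) ^ k) * (U₁ * W)) * (T * (W * S)) := by rw [hUabk]
      _ = ((A*W) ^ k * (B*W) ^ k) * ((C*W) ^ k * (V * (W * (T * (W * S))))) := by
          rw [hV]; simp only [Matrix.mul_assoc]
      _ = ((A*W) * (B*W) * (C*W)) ^ k * (V * (W * (T * (W * S)))) := by
          rw [pow_split k]; simp only [Matrix.mul_assoc]
  obtain ⟨G, hG⟩ := hXfac
  have hle1 : (U₁ * W * Y₄ * W * Z₃).rank ≤ (((A*W) * (B*W) * (C*W)) ^ k).rank := by
    rw [hG]; exact Matrix.rank_mul_le_left _ _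
  have hle2 : (((A*W) * (B*W) * (C*W)) ^ k).rank ≤ (U₁ * W * Y₄ * W * Z₃).rank := by
    calc (((A*W) * (B*W) * (C*W)) ^ k).rank
        = ((U₁ * W * Y₄ * W * Z₃) * W * ((A*W) * (B*W) * (C*W)) ^ (k + 1)).rank := by
          rw [part1]
      _ ≤ ((U₁ * W * Y₄ * W * Z₃) * W).rank := Matrix.rank_mul_le_left _ _
      _ ≤ (U₁ * W * Y₄ * W * Z₃).rank := Matrix.rank_mul_le_left _ _
  rw [he0]
  exact ⟨part1, le_antisymm hle1 hle2⟩
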